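/- arXiv:2408.02856 — 3 statements merged into one kernel-verified Lean document; each statement's English description precedes it below -/
import Mathlib

section
/- Let (e_n), (ρ_n), (γ_n), (σ_n) be sequences of nonnegative real numbers such that e_{n+1} ≤ σ_n + ρ_n·Σ_{i=0}^{n−1} e_i + (1+γ_n)·e_n for all n ∈ ℕ. Then for every n ∈ ℕ one has e_n ≤ (e_0 + Σ_{i=0}^{n−1} σ_i)·exp(Σ_{i=0}^{n−1} (i·ρ_i + γ_i)). -/
namespace GronwallPaper

/-- **Discrete Gronwall inequality** (Proposition 2.2).
If nonnegative sequences satisfy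
`e (n+1) ≤ σ n + ρ n * ∑_{i<n} e i + (1 + γ n) * e n` for all `n`, then
`e n ≤ (e 0 + ∑_{i<n} σ i) * exp (∑_{i<n} (i * ρ i + γ i))` for all `n`. -/
theorem discrete_gronwall (e ρ γ σ : ℕ → ℝ)
    (he : ∀ n, 0 ≤ e n) (hρ : ∀ n, 0 ≤ ρ n) (hγ : ∀ n, 0 ≤ γ n) (hσ : ∀ n, 0 ≤ σ n)
    (hrec : ∀ n : ℕ, e (n + 1) ≤
      σ n + ρ n * (∑ i ∈ Finset.range n, e i) + (1 + γ n) * e n) :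
    ∀ n : ℕ, e n ≤ (e 0 + ∑ i ∈ Finset.range n, σ i) *
      Real.exp (∑ i ∈ Finset.range n, ((i : ℝ) * ρ i + γ i)) := by
  intro n
  induction n using Nat.strong_induction_on with
  | _ n ih =>
    match n with
    | 0 => simp
    | Nat.succ n =>
      set En := e 0 + ∑ i ∈ Finset.range n, σ i with hEn
      set Sn := ∑ i ∈ Finset.range n, ((i : ℝ) * ρ i + γ i) with hSn
      have hEn0 : 0 ≤ En := by
        have : 0 ≤ ∑ i ∈ Finset.range n, σ i :=
          Finset.sum_nonneg fun i _ => hσ i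
        have := he 0; linarith
      have hexp1 : (1 : ℝ) ≤ Real.exp Sn := by
        apply Real.one_le_exp
        exact Finset.sum_nonneg fun i _ =>
          add_nonneg (mul_nonneg (Nat.cast_nonneg i) (hρ i)) (hγ i)
      -- every earlier term is bounded by En * exp Sn
      have hmon : ∀ i ≤ n, e i ≤ En * Real.exp Sn := by
        intro i hi
        have h1 := ih i (Nat.lt_succ_of_le hi)
        have hE : e 0 + ∑ j ∈ Finset.range i, σ j ≤ En := by
          rw [hEn]
          have : ∑ j ∈ Finset.range i, σ j ≤ ∑ j ∈ Finset.range n, σ j :=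
            Finset.sum_le_sum_of_subset_of_nonneg
              (Finset.range_subset_range.2 hi) (fun j _ _ => hσ j)
          linarith
        have hS : ∑ j ∈ Finset.range i, ((j : ℝ) * ρ j + γ j) ≤ Sn := by
          rw [hSn]
          exact Finset.sum_le_sum_of_subset_of_nonneg
            (Finset.range_subset_range.2 hi) (fun j _ _ => add_nonneg (mul_nonneg (Nat.cast_nonneg j) (hρ j)) (hγ j))
        have hexp : Real.exp (∑ j ∈ Finset.range i, ((j : ℝ) * ρ j + γ j))
            ≤ Real.exp Sn := Real.exp_le_exp.2 hS
        have hE0 : 0 ≤ e 0 + ∑ j ∈ Finset.range i, σ j := by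
          have : 0 ≤ ∑ j ∈ Finset.range i, σ j :=
            Finset.sum_nonneg fun j _ => hσ j
          have := he 0; linarith
        calc e i ≤ (e 0 + ∑ j ∈ Finset.range i, σ j) *
              Real.exp (∑ j ∈ Finset.range i, ((j : ℝ) * ρ j + γ j)) := h1
          _ ≤ En * Real.exp Sn := by
              apply mul_le_mul hE hexp (Real.exp_nonneg _) hEn0
      have hsum : ∑ i ∈ Finset.range n, e i ≤ (n : ℝ) * (En * Real.exp Sn) := by
        calc ∑ i ∈ Finset.range n, e i
            ≤ ∑ _i ∈ Finset.range n, (En * Real.exp Sn) :=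
              Finset.sum_le_sum fun i hi =>
                hmon i (Nat.le_of_lt_succ (Nat.lt_succ_of_lt (Finset.mem_range.1 hi)))
          _ = (n : ℝ) * (En * Real.exp Sn) := by
              rw [Finset.sum_const, Finset.card_range, nsmul_eq_mul]
      have hen : e n ≤ En * Real.exp Sn := hmon n le_rfl
      have hx : (0:ℝ) ≤ (n : ℝ) * ρ n + γ n :=
        add_nonneg (mul_nonneg (Nat.cast_nonneg n) (hρ n)) (hγ n)
      have hone : ((n : ℝ) * ρ n + γ n) + 1 ≤ Real.exp ((n : ℝ) * ρ n + γ n) :=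
        Real.add_one_le_exp _
      have hEexp : 0 ≤ En * Real.exp Sn := mul_nonneg hEn0 (Real.exp_nonneg _)
      have step1 : e (n + 1) ≤ σ n + ((n : ℝ) * ρ n + 1 + γ n) * (En * Real.exp Sn) := by
        have h := hrec n
        have h2 : ρ n * (∑ i ∈ Finset.range n, e i) ≤ ρ n * ((n : ℝ) * (En * Real.exp Sn)) :=
          mul_le_mul_of_nonneg_left hsum (hρ n)
        have h3 : (1 + γ n) * e n ≤ (1 + γ n) * (En * Real.exp Sn) :=
          mul_le_mul_of_nonneg_left hen (by linarith [hγ n])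
        nlinarith
      have step2 : ((n : ℝ) * ρ n + 1 + γ n) * (En * Real.exp Sn)
          ≤ Real.exp ((n : ℝ) * ρ n + γ n) * (En * Real.exp Sn) :=
        mul_le_mul_of_nonneg_right (by linarith) hEexp
      have hsplit : ∑ i ∈ Finset.range (n+1), σ i = (∑ i ∈ Finset.range n, σ i) + σ n :=
        Finset.sum_range_succ _ _
      have hSsplit : ∑ i ∈ Finset.range (n+1), ((i : ℝ) * ρ i + γ i)
          = Sn + ((n : ℝ) * ρ n + γ n) := Finset.sum_range_succ _ _
      have hexpsplit : Real.exp (∑ i ∈ Finset.range (n+1), ((i : ℝ) * ρ i + γ i))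
          = Real.exp Sn * Real.exp ((n : ℝ) * ρ n + γ n) := by
        rw [hSsplit, Real.exp_add]
      have hexpB : (1 : ℝ) ≤ Real.exp (∑ i ∈ Finset.range (n+1), ((i : ℝ) * ρ i + γ i)) := by
        rw [hexpsplit]
        have := Real.one_le_exp hx
        nlinarith
      calc e (n + 1) ≤ σ n + ((n : ℝ) * ρ n + 1 + γ n) * (En * Real.exp Sn) := step1
        _ ≤ σ n + Real.exp ((n : ℝ) * ρ n + γ n) * (En * Real.exp Sn) := by linarith
        _ = σ n + En * Real.exp (∑ i ∈ Finset.range (n+1), ((i : ℝ) * ρ i + γ i)) := by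
            rw [hexpsplit]; ring
        _ ≤ (En + σ n) * Real.exp (∑ i ∈ Finset.range (n+1), ((i : ℝ) * ρ i + γ i)) := by
            have h := mul_le_mul_of_nonneg_left hexpB (hσ n)
            nlinarith
        _ = (e 0 + ∑ i ∈ Finset.range (n+1), σ i) *
            Real.exp (∑ i ∈ Finset.range (n+1), ((i : ℝ) * ρ i + γ i)) := by
            rw [hsplit, hEn]; ring

end GronwallPaper
end

section
/- Let T₀ < T, let ρ : [T₀,T] → ℝ≥0 be absolutely continuous, and let a, b₁, b₂ : [T₀,T] → ℝ≥0 be Lebesgue integrable. Assume ρ'(t) ≤ a(t) + b₁(t)·ρ(t) + b₂(t)·∫_{T₀}^{t} ρ(s) ds for a.e. t ∈ [T₀,T]. Then, with b(t) := max{b₁(t), b₂(t)}, for every t ∈ [T₀,T] one has ρ(t) ≤ ρ(T₀)·exp(∫_{T₀}^{t} (b(τ)+1) dτ) + ∫_{T₀}^{t} a(s)·exp(∫_{s}^{t} (b(τ)+1) dτ) ds. -/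
open MeasureTheory intervalIntegral Set

lemma fubini_square {T₀ x : ℝ} (hx : T₀ ≤ x) {f g : ℝ → ℝ}
    (hf : IntegrableOn f (Set.Icc T₀ x)) (hg : IntegrableOn g (Set.Icc T₀ x)) :
    (∫ s in T₀..x, f s) * (∫ s in T₀..x, g s)
      = (∫ s in T₀..x, f s * ∫ t in T₀..s, g t)
        + (∫ s in T₀..x, g s * ∫ t in T₀..s, f t) := by
  have hf' : IntegrableOn f (Set.Ioc T₀ x) := hf.mono_set Ioc_subset_Icc_self
  have hg' : IntegrableOn g (Set.Ioc T₀ x) := hg.mono_set Ioc_subset_Icc_self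
  set μ := volume.restrict (Set.Ioc T₀ x) with hμ
  -- the cross function
  set F : ℝ × ℝ → ℝ := fun p => if p.1 < p.2 then f p.1 * g p.2 else 0 with hF
  have hFind : F = Set.indicator {p : ℝ × ℝ | p.1 < p.2} (fun p => f p.1 * g p.2) := by
    ext p; simp [hF, Set.indicator, Set.mem_setOf_eq]
  have hmeas : MeasurableSet {p : ℝ × ℝ | p.1 < p.2} :=
    measurableSet_lt measurable_fst measurable_snd
  have hFint : Integrable F (μ.prod μ) := by
    rw [hFind]
    exact (Integrable.mul_prod hf' hg').indicator hmeas
  -- swap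
  have hswap := integral_integral_swap (f := fun s t => F (s, t)) (μ := μ) (ν := μ) hFint
  -- inner integral LHS
  have hL : ∀ s ∈ Set.Ioc T₀ x, (∫ t, F (s, t) ∂μ) = f s * ∫ t in Set.Ioc s x, g t := by
    intro s hs
    have : (fun t => F (s, t)) = Set.indicator (Set.Ioi s) (fun t => f s * g t) := by
      ext t; simp [hF, Set.indicator, Set.mem_Ioi]
    rw [this, hμ, MeasureTheory.integral_indicator measurableSet_Ioi, Measure.restrict_restrict measurableSet_Ioi]
    rw [show Set.Ioi s ∩ Set.Ioc T₀ x = Set.Ioc s x by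
      ext u; simp only [Set.mem_inter_iff, Set.mem_Ioi, Set.mem_Ioc]
      constructor
      · rintro ⟨h1, _, h3⟩; exact ⟨h1, h3⟩
      · rintro ⟨h1, h2⟩; exact ⟨h1, lt_trans hs.1 h1, h2⟩]
    rw [MeasureTheory.integral_const_mul]
  -- inner integral RHS
  have hR : ∀ t ∈ Set.Ioc T₀ x, (∫ s, F (s, t) ∂μ) = g t * ∫ s in Set.Ioc T₀ t, f s := by
    intro t ht
    have : (fun s => F (s, t)) = Set.indicator (Set.Iio t) (fun s => f s * g t) := by
      ext s; simp [hF, Set.indicator, Set.mem_Iio]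
    rw [this, hμ, MeasureTheory.integral_indicator measurableSet_Iio, Measure.restrict_restrict measurableSet_Iio]
    rw [show Set.Iio t ∩ Set.Ioc T₀ x = Set.Ioo T₀ t by
      ext u; simp only [Set.mem_inter_iff, Set.mem_Iio, Set.mem_Ioc, Set.mem_Ioo]
      constructor
      · rintro ⟨h1, h2, h3⟩; exact ⟨h2, h1⟩
      · rintro ⟨h1, h2⟩; exact ⟨h2, h1, le_trans (le_of_lt h2) ht.2⟩]
    rw [← integral_Ioc_eq_integral_Ioo]
    simp [mul_comm, MeasureTheory.integral_mul_const]
  -- notation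
  have hfI : IntervalIntegrable f volume T₀ x :=
    (intervalIntegrable_iff_integrableOn_Ioc_of_le hx).mpr hf'
  have hgI : IntervalIntegrable g volume T₀ x :=
    (intervalIntegrable_iff_integrableOn_Ioc_of_le hx).mpr hg'
  set Gp : ℝ → ℝ := fun s => ∫ t in T₀..s, g t with hGp
  set Fp : ℝ → ℝ := fun s => ∫ t in T₀..s, f t with hFp
  set Gs : ℝ → ℝ := fun s => ∫ t in s..x, g t with hGs
  have hGpc : ContinuousOn Gp (Set.uIcc T₀ x) :=
    continuousOn_primitive_interval (hg.mono_set (by rw [Set.uIcc_of_le hx]))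
  have hFpc : ContinuousOn Fp (Set.uIcc T₀ x) :=
    continuousOn_primitive_interval (hf.mono_set (by rw [Set.uIcc_of_le hx]))
  have hGsplit : ∀ s ∈ Set.uIcc T₀ x, Gs s = (∫ t in T₀..x, g t) - Gp s := by
    intro s hs
    rw [Set.uIcc_of_le hx] at hs
    have h1 : IntervalIntegrable g volume T₀ s := hgI.mono_set
      (Set.uIcc_subset_uIcc Set.left_mem_uIcc (by rw [Set.uIcc_of_le hx]; exact hs))
    have h2 : IntervalIntegrable g volume s x := hgI.mono_set
      (Set.uIcc_subset_uIcc (by rw [Set.uIcc_of_le hx]; exact hs) Set.right_mem_uIcc)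
    have := integral_add_adjacent_intervals h1 h2
    simp only [hGs, hGp]
    linarith [this]
  have hGsc : ContinuousOn Gs (Set.uIcc T₀ x) := by
    have : ContinuousOn (fun s => (∫ t in T₀..x, g t) - Gp s) (Set.uIcc T₀ x) :=
      continuousOn_const.sub hGpc
    exact this.congr hGsplit
  have i1 : IntervalIntegrable (fun s => f s * Gp s) volume T₀ x := hfI.mul_continuousOn hGpc
  have i2 : IntervalIntegrable (fun s => f s * Gs s) volume T₀ x := hfI.mul_continuousOn hGsc
  -- step 1 : split the product
  have step1 : (∫ s in T₀..x, f s) * (∫ s in T₀..x, g s)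
      = (∫ s in T₀..x, f s * Gp s) + (∫ s in T₀..x, f s * Gs s) := by
    have e1 : (∫ s in T₀..x, f s) * (∫ s in T₀..x, g s)
        = ∫ s in T₀..x, f s * (∫ t in T₀..x, g t) := by
      rw [intervalIntegral.integral_mul_const]
    rw [e1, ← intervalIntegral.integral_add i1 i2]
    apply intervalIntegral.integral_congr
    intro s hs
    show f s * (∫ t in T₀..x, g t) = f s * Gp s + f s * Gs s
    rw [hGsplit s hs]
    ring
  -- step 2 : swap the second term
  have eL : ∫ s, (f s * Gs s) ∂μ = ∫ s, (∫ t, F (s, t) ∂μ) ∂μ := by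
    apply setIntegral_congr_fun measurableSet_Ioc
    intro s hs
    show f s * Gs s = ∫ t, F (s, t) ∂μ
    rw [hL s hs]
    simp only [hGs]
    rw [intervalIntegral.integral_of_le hs.2]
  have eR : ∫ t, (g t * Fp t) ∂μ = ∫ t, (∫ s, F (s, t) ∂μ) ∂μ := by
    apply setIntegral_congr_fun measurableSet_Ioc
    intro t ht
    show g t * Fp t = ∫ s, F (s, t) ∂μ
    rw [hR t ht]
    simp only [hFp]
    rw [intervalIntegral.integral_of_le (le_of_lt ht.1)]
  have step2 : (∫ s in T₀..x, f s * Gs s) = ∫ t in T₀..x, g t * Fp t := by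
    rw [intervalIntegral.integral_of_le hx, intervalIntegral.integral_of_le hx]
    exact eL.trans (hswap.trans eR.symm)
  rw [step1, step2]

/-- Product rule for functions given by integral representations. -/
lemma prod_rule {T₀ T : ℝ} {f g F G : ℝ → ℝ}
    (hfT : IntegrableOn f (Set.Icc T₀ T)) (hgT : IntegrableOn g (Set.Icc T₀ T))
    (hFr : ∀ t ∈ Set.Icc T₀ T, F t = F T₀ + ∫ s in T₀..t, f s)
    (hGr : ∀ t ∈ Set.Icc T₀ T, G t = G T₀ + ∫ s in T₀..t, g s) :
    ∀ x ∈ Set.Icc T₀ T, F x * G x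
      = F T₀ * G T₀ + ∫ s in T₀..x, (f s * G s + F s * g s) := by
  intro x hxm
  obtain ⟨hx, hxT⟩ := hxm
  have hsub : Set.Icc T₀ x ⊆ Set.Icc T₀ T := Set.Icc_subset_Icc_right hxT
  have hf : IntegrableOn f (Set.Icc T₀ x) := hfT.mono_set hsub
  have hg : IntegrableOn g (Set.Icc T₀ x) := hgT.mono_set hsub
  have hfI : IntervalIntegrable f volume T₀ x :=
    (intervalIntegrable_iff_integrableOn_Ioc_of_le hx).mpr (hf.mono_set Set.Ioc_subset_Icc_self)
  have hgI : IntervalIntegrable g volume T₀ x :=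
    (intervalIntegrable_iff_integrableOn_Ioc_of_le hx).mpr (hg.mono_set Set.Ioc_subset_Icc_self)
  set Gp : ℝ → ℝ := fun s => ∫ t in T₀..s, g t with hGpd
  set Fp : ℝ → ℝ := fun s => ∫ t in T₀..s, f t with hFpd
  have hGpc : ContinuousOn Gp (Set.uIcc T₀ x) :=
    continuousOn_primitive_interval (hg.mono_set (by rw [Set.uIcc_of_le hx]))
  have hFpc : ContinuousOn Fp (Set.uIcc T₀ x) :=
    continuousOn_primitive_interval (hf.mono_set (by rw [Set.uIcc_of_le hx]))
  have i1 : IntervalIntegrable (fun s => f s * Gp s) volume T₀ x := hfI.mul_continuousOn hGpc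
  have i2 : IntervalIntegrable (fun s => g s * Fp s) volume T₀ x := hgI.mul_continuousOn hFpc
  have key := fubini_square hx hf hg
  have congr1 : (∫ s in T₀..x, (f s * G s + F s * g s))
      = ∫ s in T₀..x, (f s * (G T₀ + Gp s) + (F T₀ + Fp s) * g s) := by
    apply intervalIntegral.integral_congr
    intro s hs
    rw [Set.uIcc_of_le hx] at hs
    have hsT : s ∈ Set.Icc T₀ T := hsub hs
    show f s * G s + F s * g s = f s * (G T₀ + Gp s) + (F T₀ + Fp s) * g s
    rw [hGr s hsT, hFr s hsT]
  have i3 : IntervalIntegrable (fun s => f s * (G T₀ + Gp s)) volume T₀ x :=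
    hfI.mul_continuousOn (continuousOn_const.add hGpc)
  have i4 : IntervalIntegrable (fun s => (F T₀ + Fp s) * g s) volume T₀ x :=
    hgI.continuousOn_mul (continuousOn_const.add hFpc)
  have split1 : (∫ s in T₀..x, f s * (G T₀ + Gp s))
      = (∫ s in T₀..x, f s) * G T₀ + ∫ s in T₀..x, f s * Gp s := by
    have : (∫ s in T₀..x, f s * (G T₀ + Gp s))
        = ∫ s in T₀..x, (f s * G T₀ + f s * Gp s) := by
      apply intervalIntegral.integral_congr; intro s _; ring
    rw [this, intervalIntegral.integral_add (hfI.mul_const _) i1,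
      intervalIntegral.integral_mul_const]
  have split2 : (∫ s in T₀..x, (F T₀ + Fp s) * g s)
      = F T₀ * (∫ s in T₀..x, g s) + ∫ s in T₀..x, g s * Fp s := by
    have : (∫ s in T₀..x, (F T₀ + Fp s) * g s)
        = ∫ s in T₀..x, (F T₀ * g s + g s * Fp s) := by
      apply intervalIntegral.integral_congr; intro s _; ring
    rw [this, intervalIntegral.integral_add (hgI.const_mul _) i2,
      intervalIntegral.integral_const_mul]
  rw [hFr x ⟨hx, hxT⟩, hGr x ⟨hx, hxT⟩, congr1, intervalIntegral.integral_add i3 i4,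
    split1, split2]
  linear_combination key


/-- Power rule for the primitive `B` of an integrable function. -/
lemma power_rule {T₀ T : ℝ} (hT : T₀ ≤ T) {c : ℝ → ℝ} (hc : IntegrableOn c (Set.Icc T₀ T)) :
    ∀ n : ℕ, ∀ t ∈ Set.Icc T₀ T,
      (∫ τ in T₀..t, c τ) ^ (n + 1)
        = ∫ s in T₀..t, ((n : ℝ) + 1) * (c s * (∫ τ in T₀..s, c τ) ^ n) := by
  have hu : Set.uIcc T₀ T = Set.Icc T₀ T := Set.uIcc_of_le hT
  set B : ℝ → ℝ := fun t => ∫ τ in T₀..t, c τ with hBd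
  have hBc : ContinuousOn B (Set.Icc T₀ T) := by
    rw [← hu]; exact continuousOn_primitive_interval (by rw [hu]; exact hc)
  have hB0 : B T₀ = 0 := by simp [hBd]
  intro n
  induction n with
  | zero =>
    intro t ht
    simp only [pow_one, Nat.cast_zero, zero_add, pow_zero, mul_one, one_mul]
  | succ n ih =>
    intro t ht
    have hFr : ∀ u ∈ Set.Icc T₀ T,
        B u ^ (n + 1) = B T₀ ^ (n + 1) + ∫ s in T₀..u, ((n : ℝ) + 1) * (c s * B s ^ n) := by
      intro u hu'
      rw [hB0, zero_pow (Nat.succ_ne_zero n), ih u hu', zero_add]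
    have hGr : ∀ u ∈ Set.Icc T₀ T, B u = B T₀ + ∫ s in T₀..u, c s := by
      intro u hu'; rw [hB0, zero_add]
    have hfint : IntegrableOn (fun s => ((n : ℝ) + 1) * (c s * B s ^ n)) (Set.Icc T₀ T) := by
      apply Integrable.const_mul
      exact hc.mul_continuousOn (hBc.pow n) isCompact_Icc
    have hp := prod_rule (F := fun u => B u ^ (n + 1)) (G := B) hfint hc hFr hGr t ht
    simp only [hB0, zero_pow (Nat.succ_ne_zero n), zero_mul, mul_zero, zero_add] at hp
    have : (∫ s in T₀..t, (((n : ℝ) + 1) * (c s * B s ^ n) * B s + B s ^ (n + 1) * c s))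
        = ∫ s in T₀..t, ((n : ℝ) + 1 + 1) * (c s * B s ^ (n + 1)) := by
      apply intervalIntegral.integral_congr
      intro s _
      show ((n : ℝ) + 1) * (c s * B s ^ n) * B s + B s ^ (n + 1) * c s
          = ((n : ℝ) + 1 + 1) * (c s * B s ^ (n + 1))
      rw [pow_succ]; ring
    rw [this] at hp
    rw [show ((n : ℕ) + 1 : ℕ) + 1 = n + 2 from rfl, show B t ^ (n + 2) = B t ^ (n + 1) * B t from (pow_succ _ _), hp]
    apply intervalIntegral.integral_congr
    intro s _
    show ((n : ℝ) + 1 + 1) * (c s * B s ^ (n + 1)) = (((n + 1 : ℕ) : ℝ) + 1) * (c s * B s ^ (n + 1))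
    push_cast
    ring

/-- Representation of `exp (-B)` where `B` is the primitive of an integrable `c`. -/
lemma exp_rule {T₀ T : ℝ} (hT : T₀ ≤ T) {c : ℝ → ℝ} (hc : IntegrableOn c (Set.Icc T₀ T)) :
    ∀ t ∈ Set.Icc T₀ T,
      Real.exp (-(∫ τ in T₀..t, c τ))
        = 1 - ∫ s in T₀..t, c s * Real.exp (-(∫ τ in T₀..s, c τ)) := by
  have hu : Set.uIcc T₀ T = Set.Icc T₀ T := Set.uIcc_of_le hT
  set B : ℝ → ℝ := fun t => ∫ τ in T₀..t, c τ with hBd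
  have hBc : ContinuousOn B (Set.Icc T₀ T) := by
    rw [← hu]; exact continuousOn_primitive_interval (by rw [hu]; exact hc)
  obtain ⟨M, hM⟩ := isCompact_Icc.exists_bound_of_continuousOn hBc
  intro t ht
  have hsub : Set.Ioc T₀ t ⊆ Set.Icc T₀ T := fun s hs => ⟨le_of_lt hs.1, le_trans hs.2 ht.2⟩
  have hsubI : Set.Icc T₀ t ⊆ Set.Icc T₀ T := Set.Icc_subset_Icc_right ht.2
  set μ := volume.restrict (Set.Ioc T₀ t) with hμd
  set F : ℕ → ℝ → ℝ := fun n s => c s * ((-B s) ^ n / (Nat.factorial n : ℝ)) with hFd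
  have hcI : IntegrableOn c (Set.Icc T₀ t) := hc.mono_set hsubI
  have hInt : ∀ n, Integrable (F n) μ := by
    intro n
    have : IntegrableOn (F n) (Set.Icc T₀ t) := by
      apply hcI.mul_continuousOn _ isCompact_Icc
      exact (((hBc.mono hsubI).neg.pow n).div_const _)
    exact this.mono_set Set.Ioc_subset_Icc_self
  have hb : ∀ n, (∫ s, ‖F n s‖ ∂μ) ≤ (∫ s, ‖c s‖ ∂μ) * (M ^ n / (Nat.factorial n : ℝ)) := by
    intro n
    have h1 : (∫ s, ‖F n s‖ ∂μ) ≤ ∫ s, ‖c s‖ * (M ^ n / (Nat.factorial n : ℝ)) ∂μ := by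
      rw [hμd]
      have hdom : IntegrableOn (fun s => ‖c s‖ * (M ^ n / (Nat.factorial n : ℝ)))
          (Set.Ioc T₀ t) := IntegrableOn.mono_set (hcI.norm.mul_const _) Set.Ioc_subset_Icc_self
      apply setIntegral_mono_on (hInt n).norm hdom measurableSet_Ioc
      intro s hs
      have hBs : |B s| ≤ M := by
        have := hM s (hsub hs); rwa [Real.norm_eq_abs] at this
      have hM0 : 0 ≤ M := le_trans (abs_nonneg _) hBs
      simp only [hFd, Real.norm_eq_abs, abs_mul, abs_div, abs_pow, abs_neg, Nat.abs_cast]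
      gcongr
    calc (∫ s, ‖F n s‖ ∂μ) ≤ ∫ s, ‖c s‖ * (M ^ n / (Nat.factorial n : ℝ)) ∂μ := h1
      _ = (∫ s, ‖c s‖ ∂μ) * (M ^ n / (Nat.factorial n : ℝ)) := by rw [MeasureTheory.integral_mul_const]
  have hM0 : 0 ≤ M := by
    have := hM T₀ ⟨le_refl T₀, hT⟩
    exact le_trans (norm_nonneg _) this
  have hSum : Summable fun n => ∫ s, ‖F n s‖ ∂μ := by
    apply Summable.of_nonneg_of_le (fun n => integral_nonneg fun s => norm_nonneg _) hb
    exact (Real.summable_pow_div_factorial M).mul_left _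
  have hHS := hasSum_integral_of_summable_integral_norm hInt hSum
  -- identify the limit
  have hlim : (∫ s, (∑' n, F n s) ∂μ) = ∫ s in T₀..t, c s * Real.exp (-B s) := by
    rw [intervalIntegral.integral_of_le ht.1, hμd]
    apply setIntegral_congr_fun measurableSet_Ioc
    intro s _
    show (∑' n, F n s) = c s * Real.exp (-B s)
    simp only [hFd]
    rw [tsum_mul_left]
    congr 1
    rw [Real.exp_eq_exp_ℝ]
    exact (NormedSpace.expSeries_div_hasSum_exp (-B s)).tsum_eq
  -- identify each term
  have hterm : ∀ n, (∫ s, F n s ∂μ) = -((-B t) ^ (n + 1) / (Nat.factorial (n+1) : ℝ)) := by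
    intro n
    have hcBn : (∫ s in T₀..t, ((n : ℝ) + 1) * (c s * B s ^ n)) = B t ^ (n + 1) :=
      (power_rule hT hc n t ht).symm
    rw [intervalIntegral.integral_const_mul] at hcBn
    have hn1 : ((n : ℝ) + 1) ≠ 0 := by positivity
    have hshape : (∫ s, F n s ∂μ) = ((-1 : ℝ) ^ n / (Nat.factorial n : ℝ)) * ∫ s in T₀..t, c s * B s ^ n := by
      rw [intervalIntegral.integral_of_le ht.1, ← MeasureTheory.integral_const_mul, hμd]
      apply setIntegral_congr_fun measurableSet_Ioc
      intro s _
      show F n s = (-1 : ℝ) ^ n / (Nat.factorial n : ℝ) * (c s * B s ^ n)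
      simp only [hFd]
      rw [show (-B s) ^ n = (-1 : ℝ) ^ n * B s ^ n from neg_pow _ _]
      ring
    rw [hshape]
    have hIcB : (∫ s in T₀..t, c s * B s ^ n) = B t ^ (n + 1) / ((n : ℝ) + 1) := by
      field_simp at hcBn ⊢
      linarith [hcBn]
    rw [hIcB, show (-B t) ^ (n + 1) = (-1 : ℝ) ^ (n + 1) * B t ^ (n + 1) from neg_pow _ _, Nat.factorial_succ]
    have hfne : ((Nat.factorial n : ℝ) : ℝ) ≠ 0 := by exact_mod_cast (Nat.factorial_pos n).ne'
    push_cast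
    field_simp
    ring
  -- the exponential series at -B t
  have hexp : HasSum (fun n => (-B t) ^ n / (Nat.factorial n : ℝ)) (Real.exp (-B t)) := by
    rw [Real.exp_eq_exp_ℝ]
    exact NormedSpace.expSeries_div_hasSum_exp (-B t)
  have hexp1 : HasSum (fun n => (-B t) ^ (n + 1) / (Nat.factorial (n+1) : ℝ)) (Real.exp (-B t) - 1) := by
    apply (hasSum_nat_add_iff (f := fun m => (-B t) ^ m / (Nat.factorial m : ℝ)) 1).mpr
    simpa using hexp
  have hexp2 : HasSum (fun n => -((-B t) ^ (n + 1) / (Nat.factorial (n+1) : ℝ))) (1 - Real.exp (-B t)) := by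
    have := hexp1.neg
    simpa [neg_sub] using this
  have : (1 - Real.exp (-B t)) = ∫ s in T₀..t, c s * Real.exp (-B s) := by
    rw [← hlim]
    apply hexp2.unique
    have : (fun n => ∫ s, F n s ∂μ) = fun n => -((-B t) ^ (n + 1) / (Nat.factorial (n+1) : ℝ)) :=
      funext hterm
    rw [← this]
    exact hHS
  linarith [this]

/-- **Extended continuous-time Gronwall inequality** (Lemma 2.4).
Let `ρ : [T₀,T] → ℝ≥0` be absolutely continuous (encoded via its a.e. derivative `ρ'`,
integrable on `[T₀,T]`, with `ρ t = ρ T₀ + ∫_{T₀}^{t} ρ'`), and let `a, b₁, b₂ ≥ 0`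
be integrable on `[T₀,T]`.  If `ρ'(t) ≤ a t + b₁ t * ρ t + b₂ t * ∫_{T₀}^{t} ρ`
for a.e. `t ∈ [T₀,T]`, then with `b := max b₁ b₂`, for every `t ∈ [T₀,T]`,
`ρ t ≤ ρ T₀ * exp (∫_{T₀}^{t} (b+1)) + ∫_{T₀}^{t} a s * exp (∫_{s}^{t} (b+1)) ds`. -/
theorem extended_gronwall (T₀ T : ℝ) (hT : T₀ < T) (ρ ρ' a b₁ b₂ : ℝ → ℝ)
    (hρ0 : ∀ t ∈ Set.Icc T₀ T, 0 ≤ ρ t)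
    (hρ'int : IntegrableOn ρ' (Set.Icc T₀ T))
    (hAC : ∀ t ∈ Set.Icc T₀ T, ρ t = ρ T₀ + ∫ s in T₀..t, ρ' s)
    (ha0 : ∀ t ∈ Set.Icc T₀ T, 0 ≤ a t)
    (hb₁0 : ∀ t ∈ Set.Icc T₀ T, 0 ≤ b₁ t)
    (hb₂0 : ∀ t ∈ Set.Icc T₀ T, 0 ≤ b₂ t)
    (haint : IntegrableOn a (Set.Icc T₀ T))
    (hb₁int : IntegrableOn b₁ (Set.Icc T₀ T))
    (hb₂int : IntegrableOn b₂ (Set.Icc T₀ T))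
    (hineq : ∀ᵐ t ∂(volume.restrict (Set.Icc T₀ T)),
      ρ' t ≤ a t + b₁ t * ρ t + b₂ t * ∫ s in T₀..t, ρ s) :
    ∀ t ∈ Set.Icc T₀ T,
      ρ t ≤ ρ T₀ * Real.exp (∫ τ in T₀..t, (max (b₁ τ) (b₂ τ) + 1)) +
        ∫ s in T₀..t, a s * Real.exp (∫ τ in s..t, (max (b₁ τ) (b₂ τ) + 1)) := by
  have hT' : T₀ ≤ T := hT.le
  have hu : Set.uIcc T₀ T = Set.Icc T₀ T := Set.uIcc_of_le hT'
  set c : ℝ → ℝ := fun τ => max (b₁ τ) (b₂ τ) + 1 with hcd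
  have hcint : IntegrableOn c (Set.Icc T₀ T) := by
    apply Integrable.add
    · exact hb₁int.sup hb₂int
    · exact integrableOn_const measure_Icc_lt_top.ne
  set B : ℝ → ℝ := fun t => ∫ τ in T₀..t, c τ with hBd
  have hBc : ContinuousOn B (Set.Icc T₀ T) := by
    rw [← hu]; exact continuousOn_primitive_interval (by rw [hu]; exact hcint)
  set E : ℝ → ℝ := fun t => Real.exp (-B t) with hEd
  have hEc : ContinuousOn E (Set.Icc T₀ T) := Real.continuous_exp.comp_continuousOn hBc.neg
  have hB0 : B T₀ = 0 := intervalIntegral.integral_same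
  have hE0 : E T₀ = 1 := by rw [hEd]; simp [hB0]
  -- interval integrability helper
  have hII : ∀ {f : ℝ → ℝ}, IntegrableOn f (Set.Icc T₀ T) → ∀ {u v : ℝ},
      u ∈ Set.Icc T₀ T → v ∈ Set.Icc T₀ T → IntervalIntegrable f volume u v := by
    intro f hf u v hum hvm
    apply MeasureTheory.IntegrableOn.intervalIntegrable
    apply hf.mono_set
    exact (Set.uIcc_subset_uIcc (by rw [hu]; exact hum) (by rw [hu]; exact hvm)).trans hu.subset
  -- representation of E
  have hEr : ∀ t ∈ Set.Icc T₀ T, E t = E T₀ + ∫ s in T₀..t, -(c s * E s) := by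
    intro t ht
    have h : Real.exp (-B t) = 1 - ∫ s in T₀..t, c s * Real.exp (-B s) :=
      exp_rule hT' hcint t ht
    show Real.exp (-B t) = E T₀ + ∫ s in T₀..t, -(c s * Real.exp (-B s))
    rw [hE0, intervalIntegral.integral_neg, h]
    ring
  -- continuity and integrability of ρ
  have hρc : ContinuousOn ρ (Set.Icc T₀ T) := by
    have h : ContinuousOn (fun t => ρ T₀ + ∫ s in T₀..t, ρ' s) (Set.Icc T₀ T) := by
      apply continuousOn_const.add
      rw [← hu]; exact continuousOn_primitive_interval (by rw [hu]; exact hρ'int)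
    exact h.congr hAC
  have hρint : IntegrableOn ρ (Set.Icc T₀ T) := hρc.integrableOn_Icc
  set R : ℝ → ℝ := fun t => ∫ s in T₀..t, ρ s with hRd
  have hRc : ContinuousOn R (Set.Icc T₀ T) := by
    rw [← hu]; exact continuousOn_primitive_interval (by rw [hu]; exact hρint)
  have hR0 : R T₀ = 0 := intervalIntegral.integral_same
  set η : ℝ → ℝ := fun t => ρ t + R t with hηd
  have hηc : ContinuousOn η (Set.Icc T₀ T) := hρc.add hRc
  have hgint : IntegrableOn (fun s => ρ' s + ρ s) (Set.Icc T₀ T) := hρ'int.add hρint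
  have hηr : ∀ t ∈ Set.Icc T₀ T, η t = η T₀ + ∫ s in T₀..t, (ρ' s + ρ s) := by
    intro t ht
    have h1 : IntervalIntegrable ρ' volume T₀ t := hII hρ'int ⟨le_refl _, hT'⟩ ht
    have h2 : IntervalIntegrable ρ volume T₀ t := hII hρint ⟨le_refl _, hT'⟩ ht
    show ρ t + R t = (ρ T₀ + R T₀) + ∫ s in T₀..t, (ρ' s + ρ s)
    rw [hR0, hAC t ht, intervalIntegral.integral_add h1 h2]
    simp only [hRd]
    ring
  -- integrability of the E-side integrand
  have hgEint : IntegrableOn (fun s => -(c s * E s)) (Set.Icc T₀ T) :=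
    (hcint.mul_continuousOn hEc isCompact_Icc).neg
  have haEint : IntegrableOn (fun s => a s * E s) (Set.Icc T₀ T) :=
    haint.mul_continuousOn hEc isCompact_Icc
  -- product rule
  intro x hx
  have hp := prod_rule (F := η) (G := E) hgint hgEint hηr hEr x hx
  rw [hE0, mul_one] at hp
  -- the integrand estimate
  have hsub : Set.Icc T₀ x ⊆ Set.Icc T₀ T := Set.Icc_subset_Icc_right hx.2
  have hae : (fun s => (ρ' s + ρ s) * E s + η s * -(c s * E s))
      ≤ᵐ[volume.restrict (Set.Icc T₀ x)] (fun s => a s * E s) := by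
    filter_upwards [ae_restrict_of_ae_restrict_of_subset hsub hineq,
      ae_restrict_mem measurableSet_Icc] with s hs hmem
    have hmem' : s ∈ Set.Icc T₀ T := hsub hmem
    have hρs : 0 ≤ ρ s := hρ0 s hmem'
    have hRs : 0 ≤ R s := by
      apply intervalIntegral.integral_nonneg hmem.1
      intro u hu'
      exact hρ0 u ⟨hu'.1, le_trans hu'.2 (le_trans hmem.2 hx.2)⟩
    have hs' : ρ' s ≤ a s + b₁ s * ρ s + b₂ s * R s := hs
    have h2 : ρ' s + ρ s - c s * η s ≤ a s := by
      simp only [hηd, hcd]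
      nlinarith [mul_le_mul_of_nonneg_right (le_max_left (b₁ s) (b₂ s)) hρs,
        mul_le_mul_of_nonneg_right (le_max_right (b₁ s) (b₂ s)) hRs, hRs, hs']
    have h3 := mul_le_mul_of_nonneg_right h2 (Real.exp_pos (-B s)).le
    have hE : E s = Real.exp (-B s) := rfl
    show (ρ' s + ρ s) * E s + η s * -(c s * E s) ≤ a s * E s
    rw [hE]
    nlinarith [h3]
  have hEcx : ContinuousOn E (Set.uIcc T₀ x) := hEc.mono ((Set.uIcc_of_le hx.1).symm ▸ hsub)
  have hηcx : ContinuousOn η (Set.uIcc T₀ x) := hηc.mono ((Set.uIcc_of_le hx.1).symm ▸ hsub)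
  have hint1 : IntervalIntegrable (fun s => (ρ' s + ρ s) * E s + η s * -(c s * E s))
      volume T₀ x := by
    apply IntervalIntegrable.add
    · exact (hII hgint ⟨le_refl _, hT'⟩ hx).mul_continuousOn hEcx
    · exact (hII hgEint ⟨le_refl _, hT'⟩ hx).continuousOn_mul hηcx
  have hint2 : IntervalIntegrable (fun s => a s * E s) volume T₀ x :=
    hII haEint ⟨le_refl _, hT'⟩ hx
  have hmono := intervalIntegral.integral_mono_ae_restrict hx.1 hint1 hint2 hae
  -- main estimate on η E
  have hkey : η x * E x ≤ η T₀ + ∫ s in T₀..x, a s * E s := by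
    rw [hp]; linarith [hmono]
  -- multiply by exp (B x)
  have hEB : E x * Real.exp (B x) = 1 := by
    rw [hEd]
    show Real.exp (-B x) * Real.exp (B x) = 1
    rw [← Real.exp_add]; simp
  have hRx : 0 ≤ R x := by
    apply intervalIntegral.integral_nonneg hx.1
    intro u hu'
    exact hρ0 u ⟨hu'.1, le_trans hu'.2 hx.2⟩
  have hρη : ρ x ≤ η x := by
    show ρ x ≤ ρ x + R x
    linarith [hRx]
  have hη0 : η T₀ = ρ T₀ := by
    show ρ T₀ + R T₀ = ρ T₀
    rw [hR0, add_zero]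
  have hfin : η x ≤ (ρ T₀ + ∫ s in T₀..x, a s * E s) * Real.exp (B x) := by
    calc η x = (η x * E x) * Real.exp (B x) := by rw [mul_assoc, hEB, mul_one]
      _ ≤ (η T₀ + ∫ s in T₀..x, a s * E s) * Real.exp (B x) :=
          mul_le_mul_of_nonneg_right hkey (Real.exp_pos _).le
      _ = (ρ T₀ + ∫ s in T₀..x, a s * E s) * Real.exp (B x) := by rw [hη0]
  -- identify the right-hand side
  have hRHS : (ρ T₀ + ∫ s in T₀..x, a s * E s) * Real.exp (B x)
      = ρ T₀ * Real.exp (B x) + ∫ s in T₀..x, a s * Real.exp (∫ τ in s..x, c τ) := by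
    have hIc : (∫ s in T₀..x, a s * E s) * Real.exp (B x)
        = ∫ s in T₀..x, a s * Real.exp (∫ τ in s..x, c τ) := by
      rw [← intervalIntegral.integral_mul_const]
      apply intervalIntegral.integral_congr
      intro s hsm
      rw [Set.uIcc_of_le hx.1] at hsm
      have hs1 : s ∈ Set.Icc T₀ T := hsub hsm
      have hadj : (∫ τ in T₀..s, c τ) + (∫ τ in s..x, c τ) = ∫ τ in T₀..x, c τ :=
        intervalIntegral.integral_add_adjacent_intervals
          (hII hcint ⟨le_refl _, hT'⟩ hs1) (hII hcint hs1 hx)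
      show a s * E s * Real.exp (B x) = a s * Real.exp (∫ τ in s..x, c τ)
      have hBs : (∫ τ in s..x, c τ) = B x - B s := by
        have h5 : B s + (∫ τ in s..x, c τ) = B x := hadj
        linarith [h5]
      rw [hBs]
      show a s * Real.exp (-B s) * Real.exp (B x) = a s * Real.exp (B x - B s)
      rw [Real.exp_sub, Real.exp_neg]
      ring
    rw [add_mul, hIc]
  rw [hRHS] at hfin
  exact le_trans hρη hfin
end

section
/- Assume (H^F₁) with constant m_F ≥ 0 and (H^g₁) with constant β ≥ 0. Then every absolutely continuous solution x(·) of (D_{F,g}) satisfies the uniform a priori bounds 1 + ‖x(t)‖ ≤ M₁ := (1 + ‖x₀‖ + m_F/(β+1))·exp(T(β+1)) for all t ∈ [0,T], and ‖ẋ(t)‖ ≤ M₂ := m_F + βT·M₁ for a.e. t ∈ [0,T]. -/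
open MeasureTheory intervalIntegral Set

/-- `x` is an absolutely continuous solution of the integro-differential inclusion
`(D_{F,g})` on `[0,T]` with (a.e.) derivative `x'`:  `x 0 = x₀`, `x'` is integrable on
`[0,T]`, `x t = x₀ + ∫₀ᵗ x'`, and `x' t ∈ F t (x t) + ∫₀ᵗ g t s (x s) ds` a.e. on `[0,T]`. -/
def IsSolutionOf (n : ℕ) (T : ℝ) (x₀ : EuclideanSpace ℝ (Fin n))
    (F : ℝ → EuclideanSpace ℝ (Fin n) → Set (EuclideanSpace ℝ (Fin n)))
    (g : ℝ → ℝ → EuclideanSpace ℝ (Fin n) → EuclideanSpace ℝ (Fin n))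
    (x x' : ℝ → EuclideanSpace ℝ (Fin n)) : Prop :=
  x 0 = x₀ ∧ IntegrableOn x' (Set.Icc 0 T) ∧
    (∀ t ∈ Set.Icc (0 : ℝ) T, x t = x₀ + ∫ s in (0 : ℝ)..t, x' s) ∧
    (∀ᵐ t ∂(volume.restrict (Set.Icc (0 : ℝ) T)),
      x' t - ∫ s in (0 : ℝ)..t, g t s (x s) ∈ F t (x t))

/-- **A priori bounds for solutions of integro-differential inclusions** (part of
Theorem 3.1).  Under the boundedness hypotheses `(H^F₁)` and `(H^g₁)`, every solution
`x` of `(D_{F,g})` satisfies `1 + ‖x t‖ ≤ M₁ := (1+‖x₀‖+m_F/(β+1)) * exp (T(β+1))` on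
`[0,T]` and `‖x' t‖ ≤ M₂ := m_F + βT·M₁` a.e. on `[0,T]`. -/
theorem solution_apriori_bounds (n : ℕ) (T : ℝ) (hT : 0 < T)
    (x₀ : EuclideanSpace ℝ (Fin n))
    (F : ℝ → EuclideanSpace ℝ (Fin n) → Set (EuclideanSpace ℝ (Fin n)))
    (g : ℝ → ℝ → EuclideanSpace ℝ (Fin n) → EuclideanSpace ℝ (Fin n))
    (m_F β : ℝ) (hm_F : 0 ≤ m_F) (hβ : 0 ≤ β)
    (hF1 : ∀ t ∈ Set.Icc (0 : ℝ) T, ∀ y, F t y ⊆ Metric.closedBall 0 m_F)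
    (hg1 : ∀ t ∈ Set.Icc (0 : ℝ) T, ∀ s ∈ Set.Icc (0 : ℝ) t, ∀ y,
      ‖g t s y‖ ≤ β * (1 + ‖y‖))
    (x x' : ℝ → EuclideanSpace ℝ (Fin n))
    (hsol : IsSolutionOf n T x₀ F g x x') :
    (∀ t ∈ Set.Icc (0 : ℝ) T,
      1 + ‖x t‖ ≤ (1 + ‖x₀‖ + m_F / (β + 1)) * Real.exp (T * (β + 1))) ∧
    (∀ᵐ t ∂(volume.restrict (Set.Icc (0 : ℝ) T)),
      ‖x' t‖ ≤ m_F + β * T * ((1 + ‖x₀‖ + m_F / (β + 1)) * Real.exp (T * (β + 1)))) := by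
  obtain ⟨hx0, hx'int, hxeq, hincl⟩ := hsol
  have hT0 : (0:ℝ) ≤ T := hT.le
  have hK : (0:ℝ) < β + 1 := by linarith
  -- clamped continuous representative of `1 + ‖x ·‖`
  have hclamp : ∀ t : ℝ, max 0 (min t T) ∈ Icc (0:ℝ) T :=
    fun t => ⟨le_max_left _ _, max_le hT0 (min_le_right _ _)⟩
  have hclamp_eq : ∀ t ∈ Icc (0:ℝ) T, max 0 (min t T) = t := fun t ht => by
    rw [min_eq_left ht.2, max_eq_right ht.1]
  have hprim : ContinuousOn (fun u => x₀ + ∫ s in (0:ℝ)..u, x' s) (Icc 0 T) := by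
    apply continuousOn_const.add
    have := intervalIntegral.continuousOn_primitive_interval
      (a := (0:ℝ)) (b := T) (f := x') (μ := volume) (by rwa [uIcc_of_le hT0])
    rwa [uIcc_of_le hT0] at this
  set h : ℝ → ℝ := fun t => 1 + ‖x₀ + ∫ s in (0:ℝ)..(max 0 (min t T)), x' s‖ with hh
  have hcont : Continuous h := by
    apply continuous_const.add
    exact (hprim.comp_continuous
      (continuous_const.max (continuous_id.min continuous_const)) hclamp).norm
  have hx_eq : ∀ t ∈ Icc (0:ℝ) T, h t = 1 + ‖x t‖ := fun t ht => by
    rw [hh]; simp only; rw [hclamp_eq t ht, ← hxeq t ht]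
  have h1 : ∀ t, 1 ≤ h t := fun t => le_add_of_nonneg_right (norm_nonneg _)
  have h0 : ∀ t, 0 ≤ h t := fun t => zero_le_one.trans (h1 t)
  set G : ℝ → ℝ := fun t => ∫ s in (0:ℝ)..t, h s with hG
  have hGderiv : ∀ t, HasDerivAt G (h t) t := fun t =>
    intervalIntegral.integral_hasDerivAt_right (hcont.intervalIntegrable _ _)
      (hcont.stronglyMeasurableAtFilter _ _) hcont.continuousAt
  have hGcont : Continuous G :=
    continuous_iff_continuousAt.2 fun t => (hGderiv t).continuousAt
  have hGnonneg : ∀ t, 0 ≤ t → 0 ≤ G t := fun t ht =>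
    intervalIntegral.integral_nonneg ht fun s _ => h0 s
  set Ψ : ℝ → ℝ := fun t => ∫ s in (0:ℝ)..t, G s with hΨ
  have hΨderiv : ∀ t, HasDerivAt Ψ (G t) t := fun t =>
    intervalIntegral.integral_hasDerivAt_right (hGcont.intervalIntegrable _ _)
      (hGcont.stronglyMeasurableAtFilter _ _) hGcont.continuousAt
  have hΨnonneg : ∀ t, 0 ≤ t → 0 ≤ Ψ t := fun t ht =>
    intervalIntegral.integral_nonneg ht fun s hs => hGnonneg s hs.1
  have hA1 : (1:ℝ) ≤ 1 + ‖x₀‖ := le_add_of_nonneg_right (norm_nonneg _)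
  -- a.e. bound on x'
  have bnd : ∀ᵐ s ∂(volume.restrict (Icc (0:ℝ) T)), ‖x' s‖ ≤ m_F + β * G s := by
    filter_upwards [hincl, ae_restrict_mem measurableSet_Icc] with s hs hsmem
    have hFs : ‖x' s - ∫ r in (0:ℝ)..s, g s r (x r)‖ ≤ m_F := by
      have := hF1 s hsmem _ hs
      rwa [Metric.mem_closedBall, dist_zero_right] at this
    have hI : ‖∫ r in (0:ℝ)..s, g s r (x r)‖ ≤ β * G s := by
      rw [intervalIntegral.integral_of_le hsmem.1]
      calc ‖∫ r in Ioc (0:ℝ) s, g s r (x r)‖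
          ≤ ∫ r in Ioc (0:ℝ) s, ‖g s r (x r)‖ := norm_integral_le_integral_norm _
        _ ≤ ∫ r in Ioc (0:ℝ) s, β * h r := by
            apply integral_mono_of_nonneg
              (Filter.Eventually.of_forall fun r => norm_nonneg _)
              ((continuous_const.mul hcont).integrableOn_Ioc)
            filter_upwards [ae_restrict_mem measurableSet_Ioc] with r hr
            have hr' : r ∈ Icc (0:ℝ) s := Ioc_subset_Icc_self hr
            have := hg1 s hsmem r hr' (x r)
            rwa [← hx_eq r ⟨hr'.1, hr'.2.trans hsmem.2⟩] at this
        _ = β * G s := by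
            rw [MeasureTheory.integral_const_mul, hG]
            simp only
            rw [intervalIntegral.integral_of_le hsmem.1]
    calc ‖x' s‖ = ‖(x' s - ∫ r in (0:ℝ)..s, g s r (x r)) + ∫ r in (0:ℝ)..s, g s r (x r)‖ := by
          rw [sub_add_cancel]
      _ ≤ ‖x' s - ∫ r in (0:ℝ)..s, g s r (x r)‖ + ‖∫ r in (0:ℝ)..s, g s r (x r)‖ :=
          norm_add_le _ _
      _ ≤ m_F + β * G s := add_le_add hFs hI
  -- integral inequality for h
  have step1 : ∀ t ∈ Icc (0:ℝ) T, h t ≤ (1 + ‖x₀‖) + m_F * t + β * Ψ t := by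
    intro t ht
    have hx'n : ‖∫ s in (0:ℝ)..t, x' s‖ ≤ m_F * t + β * Ψ t := by
      rw [intervalIntegral.integral_of_le ht.1]
      calc ‖∫ s in Ioc (0:ℝ) t, x' s‖
          ≤ ∫ s in Ioc (0:ℝ) t, ‖x' s‖ := norm_integral_le_integral_norm _
        _ ≤ ∫ s in Ioc (0:ℝ) t, (m_F + β * G s) := by
            apply integral_mono_of_nonneg
              (Filter.Eventually.of_forall fun s => norm_nonneg _)
              ((continuous_const.add (continuous_const.mul hGcont)).integrableOn_Ioc)
            exact ae_restrict_of_ae_restrict_of_subset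
              (show Ioc (0:ℝ) t ⊆ Icc 0 T from fun s hs => ⟨hs.1.le, hs.2.trans ht.2⟩) bnd
        _ = m_F * t + β * Ψ t := by
            rw [← intervalIntegral.integral_of_le ht.1,
              intervalIntegral.integral_add (g := fun s => β * G s) intervalIntegrable_const
                ((continuous_const.mul hGcont).intervalIntegrable _ _),
              intervalIntegral.integral_const, intervalIntegral.integral_const_mul]
            rw [hΨ]
            simp [smul_eq_mul, mul_comm]
    have hxt : h t = 1 + ‖x₀ + ∫ s in (0:ℝ)..t, x' s‖ := by
      rw [hh]; simp only; rw [hclamp_eq t ht]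
    have := norm_add_le x₀ (∫ s in (0:ℝ)..t, x' s)
    rw [hxt]
    linarith
  -- Grönwall
  set M₁ : ℝ := (1 + ‖x₀‖ + m_F / (β + 1)) * Real.exp (T * (β + 1)) with hM₁
  have key : ∀ t ∈ Icc (0:ℝ) T, h t ≤ M₁ := by
    set z : ℝ → ℝ := fun t => (1 + ‖x₀‖) + m_F * t + β * Ψ t + G t with hz
    have hzderiv : ∀ t, HasDerivAt z (m_F + β * G t + h t) t := by
      intro t
      have := (((hasDerivAt_const t (1 + ‖x₀‖)).add
        ((hasDerivAt_id t).const_mul m_F)).add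
        ((hΨderiv t).const_mul β)).add (hGderiv t)
      have e : m_F + β * G t + h t = 0 + m_F * 1 + β * G t + h t := by ring
      rw [e]
      exact this
    have hznn : ∀ t ∈ Icc (0:ℝ) T, 0 ≤ z t := by
      intro t ht
      have := hΨnonneg t ht.1
      have := hGnonneg t ht.1
      have : 0 ≤ m_F * t := mul_nonneg hm_F ht.1
      rw [hz]
      simp only
      nlinarith [hΨnonneg t ht.1, hGnonneg t ht.1, norm_nonneg x₀]
    have hz0 : z 0 = 1 + ‖x₀‖ := by
      rw [hz]; simp [hΨ, hG]
    have grb := norm_le_gronwallBound_of_norm_deriv_right_le (E := ℝ)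
      (f := z) (f' := fun t => m_F + β * G t + h t) (δ := 1 + ‖x₀‖) (K := β + 1)
      (ε := m_F) (a := 0) (b := T)
      (Continuous.continuousOn
        (((continuous_const.add (continuous_const.mul continuous_id)).add
          (continuous_const.mul (continuous_iff_continuousAt.2
            fun t => (hΨderiv t).continuousAt))).add hGcont))
      (fun t _ => (hzderiv t).hasDerivWithinAt)
      (by rw [hz0, Real.norm_of_nonneg (by linarith)])
      (by
        intro t ht
        have ht' : t ∈ Icc (0:ℝ) T := ⟨ht.1, ht.2.le⟩
        have hst := step1 t ht'
        have hGn := hGnonneg t ht.1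
        have hΨn := hΨnonneg t ht.1
        have hmt : 0 ≤ m_F * t := mul_nonneg hm_F ht.1
        have hzt : 0 ≤ z t := hznn t ht'
        rw [Real.norm_of_nonneg (by positivity), Real.norm_of_nonneg hzt, hz]
        simp only
        nlinarith [norm_nonneg x₀, mul_nonneg hβ hmt,
          mul_nonneg (mul_nonneg hβ hβ) hΨn, mul_nonneg hβ hΨn,
          mul_nonneg hβ (norm_nonneg x₀), h0 t])
    intro t ht
    have hzb := grb t ht
    rw [Real.norm_of_nonneg (hznn t ht), sub_zero,
      gronwallBound_of_K_ne_0 hK.ne'] at hzb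
    simp only at hzb
    have hht : h t ≤ z t := by
      have := step1 t ht
      have := hGnonneg t ht.1
      rw [hz]; simp only; linarith
    have hexp1 : Real.exp ((β + 1) * t) ≤ Real.exp (T * (β + 1)) := by
      apply Real.exp_le_exp.2
      nlinarith [ht.1, ht.2]
    have hexp0 : (1:ℝ) ≤ Real.exp ((β + 1) * t) :=
      Real.one_le_exp (mul_nonneg hK.le ht.1)
    have hdivnn : 0 ≤ m_F / (β + 1) := div_nonneg hm_F hK.le
    have hA0 : (0:ℝ) ≤ 1 + ‖x₀‖ := by linarith
    have hm1 := mul_le_mul_of_nonneg_left hexp1 hA0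
    have hm2 := mul_le_mul_of_nonneg_left hexp1 hdivnn
    have hc : 0 ≤ m_F / (β + 1) * Real.exp ((β + 1) * t) :=
      mul_nonneg hdivnn (Real.exp_pos _).le
    have hhb : h t ≤ (1 + ‖x₀‖) * Real.exp ((β + 1) * t)
        + m_F / (β + 1) * (Real.exp ((β + 1) * t) - 1) := hht.trans hzb
    rw [hM₁]
    nlinarith [hhb, hm1, hm2, hdivnn]
  have hM₁0 : 0 ≤ M₁ := by
    have he := Real.exp_pos (T * (β + 1))
    have hd : 0 ≤ m_F / (β + 1) := div_nonneg hm_F hK.le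
    rw [hM₁]
    nlinarith [norm_nonneg x₀]
  constructor
  · intro t ht
    rw [← hx_eq t ht]
    exact key t ht
  · filter_upwards [bnd, ae_restrict_mem measurableSet_Icc] with t hbt htmem
    have hGle : G t ≤ T * M₁ := by
      have h1 : G t ≤ ∫ _s in (0:ℝ)..t, M₁ := by
        rw [hG]; simp only
        apply intervalIntegral.integral_mono_on htmem.1
          (hcont.intervalIntegrable _ _) intervalIntegrable_const
        exact fun s hs => key s ⟨hs.1, hs.2.trans htmem.2⟩
      rw [intervalIntegral.integral_const, smul_eq_mul, sub_zero] at h1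
      calc G t ≤ t * M₁ := h1
        _ ≤ T * M₁ := mul_le_mul_of_nonneg_right htmem.2 hM₁0
    calc ‖x' t‖ ≤ m_F + β * G t := hbt
      _ ≤ m_F + β * (T * M₁) := by
          have := mul_le_mul_of_nonneg_left hGle hβ
          linarith
      _ = m_F + β * T * M₁ := by ring
end
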